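/- Let $g:\mathbb{D}\to\mathbb{C}$ be defined by $g(z)=e^{\frac{z+1}{z-1}}$, and let $K\subseteq\mathbb{D}$ be a set with $1\in\overline{K}$. Then $g(z)\to 0$ as $z\to 1$ with $z\in K$ if and only if for every disk $D\subseteq\mathbb{D}$ which is internally tangent to the unit circle at $1$ (i.e., $D$ is the open ball of radius $r$ centered at $1-r$ for some $0<r<1$), there is an $\varepsilon>0$ such that $K\cap B(1;\varepsilon)\subseteq D$. -/

import Mathlib

open Set Metric Filter

lemma aux_mem_iff (r : ℝ) (hr : 0 < r) (z : ℂ) (hz : z ∈ ball (0:ℂ) 1) :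
    z ∈ ball (1 - (r:ℂ)) r ↔ ((z + 1) / (z - 1)).re < -((1 - r) / r) := by
  have hz1 : z ≠ 1 := by
    rintro rfl; simp at hz
  have hns : 0 < Complex.normSq (z - 1) := by
    rwa [Complex.normSq_pos, sub_ne_zero]
  have hre : ((z + 1) / (z - 1)).re
      = (Complex.normSq z - 1) / Complex.normSq (z - 1) := by
    rw [Complex.div_re]
    simp [Complex.normSq_apply]
    ring
  rw [hre, mem_ball, Complex.dist_eq,
    show -((1 - r) / r) = (-(1 - r)) / r by ring,
    div_lt_div_iff₀ hns hr]
  have h1 : z - (1 - (r:ℂ)) = z - 1 + r := by ring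
  constructor
  · intro h
    have h2 : ‖z - (1 - (r:ℂ))‖ ^ 2 < r ^ 2 := by
      nlinarith [norm_nonneg (z - (1 - (r:ℂ)))]
    rw [Complex.sq_norm] at h2
    simp only [Complex.normSq_apply, Complex.sub_re, Complex.sub_im, Complex.one_re,
      Complex.one_im, Complex.ofReal_re, Complex.ofReal_im] at h2 ⊢
    nlinarith [h2]
  · intro h
    have h2 : Complex.normSq (z - (1 - (r:ℂ))) < r ^ 2 := by
      simp only [Complex.normSq_apply, Complex.sub_re, Complex.sub_im, Complex.one_re,
        Complex.one_im, Complex.ofReal_re, Complex.ofReal_im] at h ⊢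
      nlinarith [h]
    rw [← Complex.sq_norm] at h2
    nlinarith [norm_nonneg (z - (1 - (r:ℂ)))]

/-- For `g z = exp ((z+1)/(z-1))` and `K ⊆ 𝔻` with `1 ∈ closure K`,
`g z → 0` as `z → 1` within `K` if and only if for every disk `B(1-r; r) ⊆ 𝔻`
(`0 < r < 1`) tangent to the unit circle at `1`, there is `ε > 0` with
`K ∩ B(1; ε) ⊆ B(1-r; r)`. -/
theorem convergence_set_for_g_iff
    (K : Set ℂ) (hK : K ⊆ ball (0:ℂ) 1) (hK1 : (1:ℂ) ∈ closure K) :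
    Tendsto (fun z : ℂ => Complex.exp ((z + 1) / (z - 1))) (nhdsWithin 1 K) (nhds 0) ↔
      ∀ r : ℝ, 0 < r → r < 1 →
        ∃ ε > 0, K ∩ ball (1:ℂ) ε ⊆ ball (1 - (r:ℂ)) r := by
  constructor
  · intro h r hr0 hr1
    have hM : (0:ℝ) < Real.exp (-((1 - r) / r)) := Real.exp_pos _
    have hev : ∀ᶠ z in nhdsWithin 1 K,
        dist (Complex.exp ((z + 1) / (z - 1))) 0 < Real.exp (-((1 - r) / r)) :=
      (Metric.tendsto_nhds.mp h) _ hM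
    rw [Filter.eventually_iff, Metric.mem_nhdsWithin_iff] at hev
    obtain ⟨ε, hε, hsub⟩ := hev
    refine ⟨ε, hε, fun z hz => ?_⟩
    have hz' := hsub ⟨hz.2, hz.1⟩
    simp only [mem_setOf_eq, dist_zero_right, Complex.norm_exp] at hz'
    have : ((z + 1) / (z - 1)).re < -((1 - r) / r) := Real.exp_lt_exp.mp hz'
    exact (aux_mem_iff r hr0 z (hK hz.1)).mpr this
  · intro h
    rw [Metric.tendsto_nhds]
    intro δ hδ
    set M : ℝ := max 1 (1 - Real.log δ) with hMdef
    have hM1 : (1:ℝ) ≤ M := le_max_left _ _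
    have hM0 : (0:ℝ) < M := lt_of_lt_of_le one_pos hM1
    have hexp : Real.exp (-M) < δ := by
      have h2 : -M ≤ -(1 - Real.log δ) := neg_le_neg (le_max_right _ _)
      calc Real.exp (-M) ≤ Real.exp (Real.log δ - 1) := by
            apply Real.exp_le_exp.mpr; linarith
        _ < Real.exp (Real.log δ) := by apply Real.exp_lt_exp.mpr; linarith
        _ = δ := Real.exp_log hδ
    set r : ℝ := 1 / (M + 1) with hrdef
    have hr0 : 0 < r := by positivity
    have hr1 : r < 1 := by
      rw [hrdef, div_lt_one (by linarith)]; linarith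
    have hMr : (1 - r) / r = M := by
      rw [hrdef]; field_simp; ring
    obtain ⟨ε, hε, hsub⟩ := h r hr0 hr1
    filter_upwards [self_mem_nhdsWithin,
      mem_nhdsWithin_of_mem_nhds (ball_mem_nhds (1:ℂ) hε)] with z hzK hzε
    have hzb : z ∈ ball (1 - (r:ℂ)) r := hsub ⟨hzK, hzε⟩
    have hlt : ((z + 1) / (z - 1)).re < -((1 - r) / r) :=
      (aux_mem_iff r hr0 z (hK hzK)).mp hzb
    rw [hMr] at hlt
    simp only [dist_zero_right, Complex.norm_exp]
    calc Real.exp (((z + 1) / (z - 1)).re) < Real.exp (-M) := Real.exp_lt_exp.mpr hlt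
      _ < δ := hexp
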